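/- The diversity order of XP-HARQ with K = 2 equals 2: if P1 = P2 = γ̄·σ², then as γ̄ → ∞, −log(P_out,2)/log(γ̄) → 2. -/

import Mathlib

open MeasureTheory ProbabilityTheory Real Filter
open Set

/-- The XP-HARQ outage probability after 2 rounds,
`P_out,2 = Pr(I₁ < R₁ ∧ I₁ + I₂ < R₁ + R₂)` with `I_k = log₂(1 + γ_k)`, where
`γ₁, γ₂` are independent exponential random variables with rates `σ²/P₁, σ²/P₂`,
realized canonically on `ℝ × ℝ` with the product of exponential measures. -/
noncomputable def poutTwo (σ2 P1 P2 R1 R2 : ℝ) : ℝ :=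
  (((expMeasure (σ2 / P1)).prod (expMeasure (σ2 / P2)))
    {p : ℝ × ℝ | Real.logb 2 (1 + p.1) < R1 ∧
      Real.logb 2 (1 + p.1) + Real.logb 2 (1 + p.2) < R1 + R2}).toReal

lemma expMeasure_apply' (r : ℝ) {s : Set ℝ} (hs : MeasurableSet s) :
    expMeasure r s = ∫⁻ x in s, exponentialPDF r x := by
  rw [expMeasure, gammaMeasure, withDensity_apply _ hs]
  rfl

lemma expMeasure_Iic' {r : ℝ} (hr : 0 < r) {t : ℝ} (ht : 0 ≤ t) :
    expMeasure r (Iic t) = ENNReal.ofReal (1 - rexp (-(r*t))) := by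
  rw [expMeasure_apply' r measurableSet_Iic, lintegral_exponentialPDF_eq_antiDeriv hr, if_pos ht]

lemma expMeasure_Iio_zero (r : ℝ) : expMeasure r (Iio 0) = 0 := by
  rw [expMeasure_apply' r measurableSet_Iio]
  exact lintegral_exponentialPDF_of_nonpos le_rfl

lemma expMeasure_singleton (r t : ℝ) : expMeasure r {t} = 0 := by
  rw [expMeasure_apply' r (measurableSet_singleton t)]
  exact setLIntegral_measure_zero _ _ (measure_singleton t)

lemma expMeasure_Iic_le {r : ℝ} (hr : 0 < r) {t : ℝ} (ht : 0 ≤ t) :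
    expMeasure r (Iic t) ≤ ENNReal.ofReal (r * t) := by
  rw [expMeasure_Iic' hr ht]
  apply ENNReal.ofReal_le_ofReal
  nlinarith [Real.add_one_le_exp (-(r*t))]

lemma expMeasure_Ioo_ge {r : ℝ} (hr : 0 < r) {t : ℝ} (ht : 0 ≤ t) :
    ENNReal.ofReal (r * t * rexp (-(r*t))) ≤ expMeasure r (Ioo 0 t) := by
  have hsub : Iic t ⊆ (Ioo 0 t ∪ Iic 0) ∪ {t} := by
    intro x hx
    rcases le_or_gt x 0 with h | h
    · exact Or.inl (Or.inr h)
    · rcases eq_or_lt_of_le (show x ≤ t from hx) with h2 | h2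
      · exact Or.inr h2
      · exact Or.inl (Or.inl ⟨h, h2⟩)
  have h1 : expMeasure r (Iic t) ≤ expMeasure r (Ioo 0 t) := by
    calc expMeasure r (Iic t) ≤ expMeasure r ((Ioo 0 t ∪ Iic 0) ∪ {t}) := measure_mono hsub
    _ ≤ (expMeasure r (Ioo 0 t) + expMeasure r (Iic 0)) + expMeasure r {t} :=
      le_trans (measure_union_le _ _) (by gcongr; exact measure_union_le _ _)
    _ = expMeasure r (Ioo 0 t) := by
      rw [expMeasure_singleton, expMeasure_Iic' hr le_rfl]
      simp
  refine le_trans ?_ (le_trans (le_of_eq (expMeasure_Iic' hr ht).symm) h1)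
  apply ENNReal.ofReal_le_ofReal
  have hmul : rexp (-(r*t)) * rexp (r*t) = 1 := by rw [← Real.exp_add]; simp
  nlinarith [Real.add_one_le_exp (r*t), Real.exp_pos (-(r*t)), hmul]

noncomputable def outSet (R1 R2 : ℝ) : Set (ℝ × ℝ) :=
  {p : ℝ × ℝ | Real.logb 2 (1 + p.1) < R1 ∧
      Real.logb 2 (1 + p.1) + Real.logb 2 (1 + p.2) < R1 + R2}

lemma outSet_subset (R1 R2 : ℝ) (hR1 : 0 < R1) (hR2 : 0 < R2) :
    outSet R1 R2 ⊆ (Iic ((2:ℝ)^R1 - 1) ×ˢ Iic ((2:ℝ)^(R1+R2) - 1))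
      ∪ (Iio 0 ×ˢ univ) ∪ (univ ×ˢ Iio 0) := by
  rintro ⟨x, y⟩ ⟨h1, h2⟩
  rcases lt_or_ge x 0 with hx | hx
  · exact Or.inl (Or.inr ⟨hx, trivial⟩)
  rcases lt_or_ge y 0 with hy | hy
  · exact Or.inr ⟨trivial, hy⟩
  refine Or.inl (Or.inl ⟨?_, ?_⟩)
  · have := (Real.logb_lt_iff_lt_rpow one_lt_two (by linarith : (0:ℝ) < 1 + x)).1 h1
    simp only [mem_Iic]; linarith
  · have h0 : (0:ℝ) ≤ logb 2 (1 + x) := Real.logb_nonneg one_lt_two (by linarith)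
    have h3 : logb 2 (1 + y) < R1 + R2 := by linarith
    have := (Real.logb_lt_iff_lt_rpow one_lt_two (by linarith : (0:ℝ) < 1 + y)).1 h3
    simp only [mem_Iic]; linarith

lemma subset_outSet (R1 R2 : ℝ) (hR1 : 0 < R1) (hR2 : 0 < R2) :
    (Ioo 0 ((2:ℝ)^R1 - 1) ×ˢ Ioo 0 ((2:ℝ)^R2 - 1)) ⊆ outSet R1 R2 := by
  rintro ⟨x, y⟩ ⟨⟨hx0, hxa⟩, ⟨hy0, hyb⟩⟩
  have hx1 : (0:ℝ) < 1 + x := by linarith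
  have hy1 : (0:ℝ) < 1 + y := by linarith
  constructor
  · exact (Real.logb_lt_iff_lt_rpow one_lt_two hx1).2 (by linarith)
  · have hmul : logb 2 (1 + x) + logb 2 (1 + y) = logb 2 ((1+x)*(1+y)) :=
      (Real.logb_mul (by positivity) (by positivity)).symm
    rw [hmul]
    refine (Real.logb_lt_iff_lt_rpow one_lt_two (by positivity)).2 ?_
    have : (2:ℝ)^(R1+R2) = (2:ℝ)^R1 * (2:ℝ)^R2 := Real.rpow_add two_pos R1 R2
    rw [this]
    nlinarith [hx1, hy1, hxa, hyb]

lemma pout_bounds (R1 R2 : ℝ) (hR1 : 0 < R1) (hR2 : 0 < R2) {r : ℝ} (hr : 0 < r) :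
    r * ((2:ℝ)^R1 - 1) * rexp (-(r * ((2:ℝ)^R1 - 1)))
      * (r * ((2:ℝ)^R2 - 1) * rexp (-(r * ((2:ℝ)^R2 - 1))))
      ≤ (((expMeasure r).prod (expMeasure r)) (outSet R1 R2)).toReal ∧
    (((expMeasure r).prod (expMeasure r)) (outSet R1 R2)).toReal
      ≤ r * ((2:ℝ)^R1 - 1) * (r * ((2:ℝ)^(R1+R2) - 1)) := by
  set a := (2:ℝ)^R1 - 1 with ha_def
  set b := (2:ℝ)^R2 - 1 with hb_def
  set c := (2:ℝ)^(R1+R2) - 1 with hc_def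
  have ha : 0 < a := by
    have : (1:ℝ) < (2:ℝ)^R1 :=
      Real.one_lt_rpow_iff_of_pos two_pos |>.2 (Or.inl ⟨one_lt_two, hR1⟩)
    linarith
  have hb : 0 < b := by
    have : (1:ℝ) < (2:ℝ)^R2 :=
      Real.one_lt_rpow_iff_of_pos two_pos |>.2 (Or.inl ⟨one_lt_two, hR2⟩)
    linarith
  have hc : 0 < c := by
    have : (1:ℝ) < (2:ℝ)^(R1+R2) :=
      Real.one_lt_rpow_iff_of_pos two_pos |>.2 (Or.inl ⟨one_lt_two, by linarith⟩)
    linarith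
  have hprob : IsProbabilityMeasure (expMeasure r) := isProbabilityMeasure_expMeasure hr
  set μ := expMeasure r
  have hupper : (μ.prod μ) (outSet R1 R2) ≤ ENNReal.ofReal (r * a * (r * c)) := by
    calc (μ.prod μ) (outSet R1 R2)
        ≤ (μ.prod μ) ((Iic a ×ˢ Iic c) ∪ (Iio 0 ×ˢ univ) ∪ (univ ×ˢ Iio 0)) :=
          measure_mono (outSet_subset R1 R2 hR1 hR2)
      _ ≤ ((μ.prod μ) (Iic a ×ˢ Iic c) + (μ.prod μ) (Iio 0 ×ˢ univ))
            + (μ.prod μ) (univ ×ˢ Iio 0) :=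
          le_trans (measure_union_le _ _) (by gcongr; exact measure_union_le _ _)
      _ = μ (Iic a) * μ (Iic c) := by
          rw [Measure.prod_prod, Measure.prod_prod, Measure.prod_prod,
            expMeasure_Iio_zero, zero_mul, mul_zero, add_zero, add_zero]
      _ ≤ ENNReal.ofReal (r * a) * ENNReal.ofReal (r * c) := by
          exact mul_le_mul' (expMeasure_Iic_le hr ha.le) (expMeasure_Iic_le hr hc.le)
      _ = ENNReal.ofReal (r * a * (r * c)) :=
          (ENNReal.ofReal_mul (by positivity : 0 ≤ r * a)).symm
  have hne : (μ.prod μ) (outSet R1 R2) ≠ ⊤ :=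
    ne_top_of_le_ne_top ENNReal.ofReal_ne_top hupper
  have hlower : ENNReal.ofReal (r * a * rexp (-(r * a)) * (r * b * rexp (-(r * b))))
      ≤ (μ.prod μ) (outSet R1 R2) := by
    calc ENNReal.ofReal (r * a * rexp (-(r * a)) * (r * b * rexp (-(r * b))))
        = ENNReal.ofReal (r * a * rexp (-(r * a))) *
            ENNReal.ofReal (r * b * rexp (-(r * b))) :=
          ENNReal.ofReal_mul (by positivity)
      _ ≤ μ (Ioo 0 a) * μ (Ioo 0 b) :=
          mul_le_mul' (expMeasure_Ioo_ge hr ha.le) (expMeasure_Ioo_ge hr hb.le)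
      _ = (μ.prod μ) (Ioo 0 a ×ˢ Ioo 0 b) := (Measure.prod_prod _ _).symm
      _ ≤ (μ.prod μ) (outSet R1 R2) := measure_mono (subset_outSet R1 R2 hR1 hR2)
  constructor
  · exact (ENNReal.ofReal_le_iff_le_toReal hne).1 hlower
  · exact ENNReal.toReal_le_of_le_ofReal (by positivity) hupper


/-- The diversity order of XP-HARQ with `K = 2` equals 2:
with `P₁ = P₂ = γ̄·σ²`, as `γ̄ → ∞`, `−log(P_out,2)/log(γ̄) → 2`. -/
theorem diversity_order_K2
    (σ2 R1 R2 : ℝ) (hσ : 0 < σ2) (hR1 : 0 < R1) (hR2 : 0 < R2) :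
    Filter.Tendsto
      (fun snr : ℝ =>
        - Real.log (poutTwo σ2 (snr * σ2) (snr * σ2) R1 R2) / Real.log snr)
      Filter.atTop (nhds 2) := by
  set a := (2:ℝ)^R1 - 1 with ha_def
  set b := (2:ℝ)^R2 - 1 with hb_def
  set c := (2:ℝ)^(R1+R2) - 1 with hc_def
  have ha : 0 < a := by
    have : (1:ℝ) < (2:ℝ)^R1 :=
      Real.one_lt_rpow_iff_of_pos two_pos |>.2 (Or.inl ⟨one_lt_two, hR1⟩)
    linarith
  have hb : 0 < b := by
    have : (1:ℝ) < (2:ℝ)^R2 :=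
      Real.one_lt_rpow_iff_of_pos two_pos |>.2 (Or.inl ⟨one_lt_two, hR2⟩)
    linarith
  have hc : 0 < c := by
    have : (1:ℝ) < (2:ℝ)^(R1+R2) :=
      Real.one_lt_rpow_iff_of_pos two_pos |>.2 (Or.inl ⟨one_lt_two, by linarith⟩)
    linarith
  set K : ℝ := a * b * rexp (-1) * rexp (-1) with hK_def
  have hK : 0 < K := by positivity
  have hac : 0 < a * c := by positivity
  have hlim1 : Tendsto (fun snr : ℝ => 2 - Real.log (a*c) / Real.log snr) atTop (nhds 2) := by
    have h0 : Tendsto (fun snr : ℝ => Real.log (a*c) / Real.log snr) atTop (nhds 0) :=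
      Tendsto.div_atTop tendsto_const_nhds Real.tendsto_log_atTop
    simpa using (tendsto_const_nhds (x := (2:ℝ))).sub h0
  have hlim2 : Tendsto (fun snr : ℝ => 2 - Real.log K / Real.log snr) atTop (nhds 2) := by
    have h0 : Tendsto (fun snr : ℝ => Real.log K / Real.log snr) atTop (nhds 0) :=
      Tendsto.div_atTop tendsto_const_nhds Real.tendsto_log_atTop
    simpa using (tendsto_const_nhds (x := (2:ℝ))).sub h0
  have hev : ∀ᶠ snr : ℝ in atTop,
      2 - Real.log (a*c) / Real.log snr
        ≤ - Real.log (poutTwo σ2 (snr * σ2) (snr * σ2) R1 R2) / Real.log snr ∧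
      - Real.log (poutTwo σ2 (snr * σ2) (snr * σ2) R1 R2) / Real.log snr
        ≤ 2 - Real.log K / Real.log snr := by
    filter_upwards [eventually_ge_atTop (max (max a b) 2)] with snr hsnr
    have hsnr2 : (2:ℝ) ≤ snr := le_trans (le_max_right _ _) hsnr
    have hsnr0 : 0 < snr := by linarith
    have hsnra : a ≤ snr := le_trans (le_trans (le_max_left _ _) (le_max_left _ _)) hsnr
    have hsnrb : b ≤ snr := le_trans (le_trans (le_max_right _ _) (le_max_left _ _)) hsnr
    set r : ℝ := 1 / snr with hr_def
    have hr : 0 < r := by positivity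
    have hrewrite : poutTwo σ2 (snr * σ2) (snr * σ2) R1 R2
        = (((expMeasure r).prod (expMeasure r)) (outSet R1 R2)).toReal := by
      have h : σ2 / (snr * σ2) = r := by
        rw [hr_def]; field_simp
      rw [poutTwo, h]; rfl
    obtain ⟨hlo, hhi⟩ := pout_bounds R1 R2 hR1 hR2 hr
    rw [← hrewrite] at hlo hhi
    simp only [← ha_def, ← hb_def, ← hc_def] at hlo hhi
    set P := poutTwo σ2 (snr * σ2) (snr * σ2) R1 R2 with hP_def
    have hra : r * a ≤ 1 := by
      rw [hr_def, div_mul_eq_mul_div, one_mul, div_le_one hsnr0]; exact hsnra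
    have hrb : r * b ≤ 1 := by
      rw [hr_def, div_mul_eq_mul_div, one_mul, div_le_one hsnr0]; exact hsnrb
    have hexpa : rexp (-1) ≤ rexp (-(r * a)) := Real.exp_le_exp.2 (by linarith)
    have hexpb : rexp (-1) ≤ rexp (-(r * b)) := Real.exp_le_exp.2 (by linarith)
    have hKle : r^2 * K ≤ P := by
      refine le_trans ?_ hlo
      have h2 : r * a * rexp (-1) ≤ r * a * rexp (-(r*a)) :=
        mul_le_mul_of_nonneg_left hexpa (by positivity)
      have h3 : r * b * rexp (-1) ≤ r * b * rexp (-(r*b)) :=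
        mul_le_mul_of_nonneg_left hexpb (by positivity)
      have heq : r^2 * K = (r * a * rexp (-1)) * (r * b * rexp (-1)) := by
        rw [hK_def]; ring
      rw [heq]
      exact mul_le_mul h2 h3 (by positivity) (by positivity)
    have hPpos : 0 < P := lt_of_lt_of_le (by positivity) hKle
    have hlogsnr : 0 < Real.log snr := Real.log_pos (by linarith)
    have hlogr : Real.log r = - Real.log snr := by
      rw [hr_def, one_div, Real.log_inv]
    have hlogP_lo : -2 * Real.log snr + Real.log K ≤ Real.log P := by
      have h := Real.log_le_log (by positivity) hKle
      rw [Real.log_mul (by positivity) (ne_of_gt hK), Real.log_pow, hlogr] at h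
      push_cast at h
      linarith
    have hlogP_hi : Real.log P ≤ -2 * Real.log snr + Real.log (a*c) := by
      have h1 : P ≤ r^2 * (a*c) := by
        refine le_trans hhi (le_of_eq ?_); ring
      have h := Real.log_le_log hPpos h1
      rw [Real.log_mul (by positivity) (ne_of_gt hac), Real.log_pow, hlogr] at h
      push_cast at h
      linarith
    constructor
    · have key : (2 * Real.log snr - Real.log (a*c)) / Real.log snr
          = 2 - Real.log (a*c) / Real.log snr := by
        field_simp
      rw [← key]
      apply div_le_div_of_nonneg_right ?_ ?_ <;> [skip; exact hlogsnr.le] <;> linarith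
    · have key : (2 * Real.log snr - Real.log K) / Real.log snr
          = 2 - Real.log K / Real.log snr := by
        field_simp
      rw [← key]
      apply div_le_div_of_nonneg_right ?_ ?_ <;> [skip; exact hlogsnr.le] <;> linarith
  exact tendsto_of_tendsto_of_tendsto_of_le_of_le' hlim1 hlim2
    (hev.mono fun _ h => h.1) (hev.mono fun _ h => h.2)
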